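/- arXiv:1709.07504 — 2 statements merged into one kernel-verified Lean document; each statement's English description precedes it below -/
import Mathlib

section
/- Let I be a finite set, I = S ⊔ T a partition into two disjoint subsets, and let y assign a nonnegative real number to each nonempty subset of I. Let P = ∑_{∅ ≠ J ⊆ I} y(J)•Δ_J ⊆ ℝ^I. Then the set of points of P maximizing the functional x ↦ ∑_{s ∈ S} x(s) equals the Minkowski sum ∑_{J : J ∩ S ≠ ∅} y(J)•Δ_{J ∩ S} + ∑_{∅ ≠ J ⊆ T} y(J)•Δ_J. -/
open Finset Pointwise

section Face
variable {E : Type*} {f : E → ℝ}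

/-- `m` is the (attained) max value of `f` on `A`. -/
def IsMaxPt (f : E → ℝ) (A : Set E) (m : ℝ) : Prop :=
  (∀ x ∈ A, f x ≤ m) ∧ ∃ x ∈ A, f x = m

/-- The subset of `A` where `f` takes the value `m`. -/
def faceAt (f : E → ℝ) (A : Set E) (m : ℝ) : Set E := {x ∈ A | f x = m}

theorem argmax_eq_faceAt {A : Set E} {m : ℝ} (h : IsMaxPt f A m) :
    {x ∈ A | ∀ w ∈ A, f w ≤ f x} = faceAt f A m := by
  obtain ⟨hle, x₀, hx₀, hfx₀⟩ := h
  ext x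
  constructor
  · rintro ⟨hxA, hmax⟩
    exact ⟨hxA, le_antisymm (hle x hxA) (hfx₀ ▸ hmax x₀ hx₀)⟩
  · rintro ⟨hxA, hfx⟩
    exact ⟨hxA, fun w hw => by rw [hfx]; exact hle w hw⟩

end Face

section FaceAdd
variable {E : Type*} [AddCommMonoid E] {f : E → ℝ}

theorem IsMaxPt.add (hadd : ∀ a b, f (a + b) = f a + f b)
    {A B : Set E} {mA mB : ℝ} (hA : IsMaxPt f A mA) (hB : IsMaxPt f B mB) :
    IsMaxPt f (A + B) (mA + mB) := by
  obtain ⟨hAle, a₀, ha₀, hfa₀⟩ := hA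
  obtain ⟨hBle, b₀, hb₀, hfb₀⟩ := hB
  constructor
  · rintro x ⟨a, ha, b, hb, rfl⟩
    rw [hadd]
    exact add_le_add (hAle a ha) (hBle b hb)
  · exact ⟨a₀ + b₀, Set.add_mem_add ha₀ hb₀, by rw [hadd, hfa₀, hfb₀]⟩

theorem faceAt_add (hadd : ∀ a b, f (a + b) = f a + f b)
    {A B : Set E} {mA mB : ℝ} (hA : IsMaxPt f A mA) (hB : IsMaxPt f B mB) :
    faceAt f (A + B) (mA + mB) = faceAt f A mA + faceAt f B mB := by
  ext x
  constructor
  · rintro ⟨⟨a, ha, b, hb, rfl⟩, hfx⟩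
    rw [hadd] at hfx
    have h1 : f a = mA := by
      have := hA.1 a ha
      have := hB.1 b hb
      linarith
    have h2 : f b = mB := by
      have := hA.1 a ha
      have := hB.1 b hb
      linarith
    exact Set.add_mem_add ⟨ha, h1⟩ ⟨hb, h2⟩
  · rintro ⟨a, ⟨ha, hfa⟩, b, ⟨hb, hfb⟩, rfl⟩
    exact ⟨Set.add_mem_add ha hb, by rw [hadd, hfa, hfb]⟩

theorem IsMaxPt.sum {ι : Type*} (h0 : f 0 = 0) (hadd : ∀ a b, f (a + b) = f a + f b)
    (s : Finset ι) (A : ι → Set E) (m : ι → ℝ) (h : ∀ i ∈ s, IsMaxPt f (A i) (m i)) :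
    IsMaxPt f (∑ i ∈ s, A i) (∑ i ∈ s, m i) := by
  induction s using Finset.cons_induction with
  | empty => exact ⟨by rintro x rfl; simp [h0], 0, rfl, h0⟩
  | cons i s hi ih =>
    rw [Finset.sum_cons, Finset.sum_cons]
    exact (h i (Finset.mem_cons_self i s)).add hadd
      (ih fun j hj => h j (Finset.mem_cons_of_mem hj))

theorem faceAt_sum {ι : Type*} (h0 : f 0 = 0) (hadd : ∀ a b, f (a + b) = f a + f b)
    (s : Finset ι) (A : ι → Set E) (m : ι → ℝ) (h : ∀ i ∈ s, IsMaxPt f (A i) (m i)) :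
    faceAt f (∑ i ∈ s, A i) (∑ i ∈ s, m i) = ∑ i ∈ s, faceAt f (A i) (m i) := by
  induction s using Finset.cons_induction with
  | empty =>
    simp only [Finset.sum_empty]
    ext x
    constructor
    · rintro ⟨rfl, -⟩; rfl
    · rintro rfl; exact ⟨rfl, h0⟩
  | cons i s hi ih =>
    rw [Finset.sum_cons, Finset.sum_cons, Finset.sum_cons,
      faceAt_add hadd (h i (Finset.mem_cons_self i s))
        (IsMaxPt.sum h0 hadd s A m fun j hj => h j (Finset.mem_cons_of_mem hj)),
      ih fun j hj => h j (Finset.mem_cons_of_mem hj)]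

end FaceAdd

section FaceSmul
variable {E : Type*} [AddCommMonoid E] [Module ℝ E] {f : E → ℝ}

theorem IsMaxPt.smul (hsmul : ∀ (c : ℝ) x, f (c • x) = c * f x)
    {A : Set E} {m : ℝ} (h : IsMaxPt f A m) {c : ℝ} (hc : 0 ≤ c) :
    IsMaxPt f (c • A) (c * m) := by
  obtain ⟨hle, x₀, hx₀, hfx₀⟩ := h
  constructor
  · rintro x ⟨a, ha, rfl⟩
    rw [hsmul]
    exact mul_le_mul_of_nonneg_left (hle a ha) hc
  · exact ⟨c • x₀, Set.smul_mem_smul_set hx₀, by rw [hsmul, hfx₀]⟩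

theorem faceAt_smul (hsmul : ∀ (c : ℝ) x, f (c • x) = c * f x)
    {A : Set E} {m : ℝ} (h : IsMaxPt f A m) {c : ℝ} (hc : 0 ≤ c)
    {F : Set E} (hF : faceAt f A m = F) :
    faceAt f (c • A) (c * m) = c • F := by
  subst hF
  rcases eq_or_lt_of_le hc with rfl | hc
  · obtain ⟨hle, x₀, hx₀, hfx₀⟩ := h
    have hA : A.Nonempty := ⟨x₀, hx₀⟩
    have hFne : (faceAt f A m).Nonempty := ⟨x₀, hx₀, hfx₀⟩
    rw [Set.zero_smul_set hA, Set.zero_smul_set hFne]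
    ext x
    constructor
    · rintro ⟨hx, -⟩; exact hx
    · rintro rfl
      refine ⟨rfl, ?_⟩
      have := hsmul 0 x₀
      simp at this
      rw [zero_mul]
      exact this
  · ext x
    constructor
    · rintro ⟨⟨a, ha, rfl⟩, hfx⟩
      rw [hsmul] at hfx
      exact Set.smul_mem_smul_set ⟨ha, by
        exact mul_left_cancel₀ (ne_of_gt hc) hfx⟩
    · rintro ⟨a, ⟨ha, hfa⟩, rfl⟩
      exact ⟨Set.smul_mem_smul_set ha, by rw [hsmul, hfa]⟩

end FaceSmul

/-- The simplex `Δ_J = conv { e_j : j ∈ J }` in `ℝ^I`. -/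
def simplexOf {I : Type*} [DecidableEq I] (J : Finset I) : Set (I → ℝ) :=
  convexHull ℝ ((fun j => Pi.single j (1 : ℝ)) '' (J : Set I))

theorem simplexOf_eq {I : Type*} [Fintype I] [DecidableEq I] (J : Finset I) :
    simplexOf J = {x | (∀ i, 0 ≤ x i) ∧ (∀ i ∉ J, x i = 0) ∧ ∑ i ∈ J, x i = 1} := by
  apply Set.Subset.antisymm
  · apply convexHull_min
    · rintro _ ⟨j, hj, rfl⟩
      refine ⟨fun i => ?_, fun i hi => ?_, ?_⟩
      · rcases eq_or_ne i j with rfl | h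
        · simp
        · simp [Pi.single_apply, h]
      · have : i ≠ j := fun h => hi (h ▸ hj)
        simp [Pi.single_apply, this]
      · rw [Finset.sum_eq_single j]
        · simp
        · intro b _ hb; simp [Pi.single_apply, hb]
        · intro h; exact absurd hj h
    · rintro u ⟨hu0, huJ, hus⟩ v ⟨hv0, hvJ, hvs⟩ a b ha hb hab
      refine ⟨fun i => ?_, fun i hi => ?_, ?_⟩
      · have := hu0 i; have := hv0 i
        simp only [Pi.add_apply, Pi.smul_apply, smul_eq_mul]
        positivity
      · simp [huJ i hi, hvJ i hi]
      · simp only [Pi.add_apply, Pi.smul_apply, smul_eq_mul]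
        rw [Finset.sum_add_distrib, ← Finset.mul_sum, ← Finset.mul_sum, hus, hvs]
        simpa using hab
  · rintro x ⟨hx0, hxJ, hxs⟩
    have hx : x = ∑ j ∈ J, x j • (Pi.single j 1 : I → ℝ) := by
      funext i
      rw [Finset.sum_apply]
      rcases Finset.decidableMem i J with hi | hi
      · rw [Finset.sum_eq_zero]
        · exact hxJ i hi
        · intro j hj
          have : i ≠ j := fun h => hi (h ▸ hj)
          simp [Pi.single_apply, this.symm]
      · rw [Finset.sum_eq_single i]
        · simp
        · intro j hj hji; simp [Pi.single_apply, hji.symm]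
        · intro h; exact absurd hi h
    rw [hx]
    have := Finset.centerMass_mem_convexHull (t := J) (w := x)
      (z := fun j => Pi.single j (1 : ℝ))
      (fun i hi => hx0 i) (by rw [hxs]; norm_num)
      (fun i hi => Set.mem_image_of_mem _ (by exact_mod_cast hi))
    rwa [Finset.centerMass, hxs, inv_one, one_smul] at this

section SimplexFace
variable {I : Type*} [Fintype I] [DecidableEq I] (S : Finset I)

theorem isMaxPt_simplex_pos (J : Finset I) (hJS : (J ∩ S).Nonempty) :
    IsMaxPt (fun x => ∑ s ∈ S, x s) (simplexOf J) 1 := by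
  rw [simplexOf_eq]
  constructor
  · rintro x ⟨hx0, hxJ, hxs⟩
    calc ∑ s ∈ S, x s = ∑ s ∈ S ∩ J, x s := by
          rw [← Finset.sum_subset (Finset.inter_subset_left (s₂ := J))]
          intro i hiS hiI
          exact hxJ i (fun h => hiI (Finset.mem_inter.2 ⟨hiS, h⟩))
      _ ≤ ∑ i ∈ J, x i :=
          Finset.sum_le_sum_of_subset_of_nonneg Finset.inter_subset_right
            (fun i _ _ => hx0 i)
      _ = 1 := hxs
  · obtain ⟨j, hj⟩ := hJS
    rw [Finset.mem_inter] at hj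
    refine ⟨Pi.single j 1, ⟨fun i => ?_, fun i hi => ?_, ?_⟩, ?_⟩
    · rcases eq_or_ne i j with rfl | h
      · simp
      · simp [Pi.single_apply, h]
    · have : i ≠ j := fun h => hi (h ▸ hj.1)
      simp [Pi.single_apply, this]
    · rw [Finset.sum_eq_single j]
      · simp
      · intro b _ hb; simp [Pi.single_apply, hb]
      · intro h; exact absurd hj.1 h
    · show ∑ s ∈ S, Pi.single j (1:ℝ) s = 1
      rw [Finset.sum_eq_single j]
      · simp
      · intro b _ hb; simp [Pi.single_apply, hb]
      · intro h; exact absurd hj.2 h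

theorem sum_eq_zero_on_simplex (J : Finset I) (hJS : J ∩ S = ∅) :
    ∀ x ∈ simplexOf J, ∑ s ∈ S, x s = 0 := by
  rw [simplexOf_eq]
  rintro x ⟨hx0, hxJ, hxs⟩
  apply Finset.sum_eq_zero
  intro s hs
  refine hxJ s (fun h => ?_)
  have : s ∈ J ∩ S := Finset.mem_inter.2 ⟨h, hs⟩
  simp [hJS] at this

theorem isMaxPt_simplex_zero (J : Finset I) (hJ : J.Nonempty) (hJS : J ∩ S = ∅) :
    IsMaxPt (fun x => ∑ s ∈ S, x s) (simplexOf J) 0 := by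
  have key := sum_eq_zero_on_simplex S J hJS
  have hne : (simplexOf J).Nonempty := by
    obtain ⟨j, hj⟩ := hJ
    exact ⟨Pi.single j 1, subset_convexHull ℝ _ (Set.mem_image_of_mem _ (by exact_mod_cast hj))⟩
  obtain ⟨x₀, hx₀⟩ := hne
  exact ⟨fun x hx => le_of_eq (key x hx), x₀, hx₀, key x₀ hx₀⟩

theorem faceAt_simplex_zero (J : Finset I) (hJS : J ∩ S = ∅) :
    faceAt (fun x => ∑ s ∈ S, x s) (simplexOf J) 0 = simplexOf J := by
  have key := sum_eq_zero_on_simplex S J hJS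
  ext x
  exact ⟨fun h => h.1, fun h => ⟨h, key x h⟩⟩

theorem faceAt_simplex_pos (J : Finset I) (hJS : (J ∩ S).Nonempty) :
    faceAt (fun x => ∑ s ∈ S, x s) (simplexOf J) 1 = simplexOf (J ∩ S) := by
  rw [faceAt, simplexOf_eq, simplexOf_eq]
  ext x
  simp only [Set.mem_setOf_eq, Set.mem_sep_iff]
  constructor
  · rintro ⟨⟨hx0, hxJ, hxs⟩, hfx⟩
    have hSJ : ∑ s ∈ S ∩ J, x s = 1 := by
      have heq : ∑ s ∈ S ∩ J, x s = ∑ s ∈ S, x s :=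
        Finset.sum_subset Finset.inter_subset_left
          (fun i hiS hiI => hxJ i (fun h => hiI (Finset.mem_inter.2 ⟨hiS, h⟩)))
      rw [heq, hfx]
    have hzero : ∀ i ∈ J \ S, x i = 0 := by
      have h1 : ∑ i ∈ J ∩ S, x i + ∑ i ∈ J \ S, x i = 1 := by
        rw [Finset.sum_inter_add_sum_sdiff]; exact hxs
      have h2 : ∑ i ∈ J ∩ S, x i = 1 := by
        rw [Finset.inter_comm]; exact hSJ
      have h3 : ∑ i ∈ J \ S, x i = 0 := by linarith
      intro i hi
      exact (Finset.sum_eq_zero_iff_of_nonneg (fun j _ => hx0 j)).1 h3 i hi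
    refine ⟨hx0, fun i hi => ?_, ?_⟩
    · rcases Finset.decidableMem i J with hiJ | hiJ
      · exact hxJ i hiJ
      · exact hzero i (Finset.mem_sdiff.2 ⟨hiJ, fun h => hi (Finset.mem_inter.2 ⟨hiJ, h⟩)⟩)
    · rw [Finset.inter_comm]; exact hSJ
  · rintro ⟨hx0, hxJS, hxs⟩
    have hJx : ∀ i ∉ J, x i = 0 := fun i hi =>
      hxJS i (fun h => hi (Finset.mem_inter.1 h).1)
    have hsum : ∑ i ∈ J, x i = 1 := by
      have heq : ∑ i ∈ J ∩ S, x i = ∑ i ∈ J, x i :=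
        Finset.sum_subset Finset.inter_subset_left
          (fun i hiJ hiJS => hxJS i hiJS)
      rw [← heq, hxs]
    refine ⟨⟨hx0, hJx, hsum⟩, ?_⟩
    calc ∑ s ∈ S, x s = ∑ s ∈ S ∩ J, x s := by
          rw [← Finset.sum_subset (Finset.inter_subset_left (s₂ := J))]
          intro i hiS hiI
          exact hxJS i fun h => hiI (Finset.mem_inter.2 ⟨hiS, (Finset.mem_inter.1 h).1⟩)
      _ = ∑ s ∈ J ∩ S, x s := by rw [Finset.inter_comm]
      _ = 1 := hxs

end SimplexFace

/-- For a partition `I = S ⊔ T` and a nonnegative Minkowski sum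
`P = ∑_{∅ ≠ J ⊆ I} y(J)•Δ_J`, the face of `P` maximizing `x ↦ ∑_{s ∈ S} x s` equals
`∑_{J : J ∩ S ≠ ∅} y(J)•Δ_{J ∩ S} + ∑_{∅ ≠ J ⊆ T} y(J)•Δ_J`. -/
theorem stmt18 {I : Type*} [Fintype I] [DecidableEq I]
    (S T : Finset I) (hST : Disjoint S T) (hUnion : S ∪ T = Finset.univ)
    (y : Finset I → ℝ) (hy : ∀ J : Finset I, J.Nonempty → 0 ≤ y J) :
    {x ∈ (∑ J ∈ Finset.univ.filter fun J : Finset I => J.Nonempty, y J • simplexOf J) |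
        ∀ w ∈ (∑ J ∈ Finset.univ.filter fun J : Finset I => J.Nonempty, y J • simplexOf J),
          (∑ s ∈ S, w s) ≤ ∑ s ∈ S, x s} =
      (∑ J ∈ Finset.univ.filter fun J : Finset I => (J ∩ S).Nonempty,
          y J • simplexOf (J ∩ S)) +
        ∑ J ∈ Finset.univ.filter fun J : Finset I => J.Nonempty ∧ J ⊆ T,
          y J • simplexOf J := by
  classical
  set f : (I → ℝ) → ℝ := fun x => ∑ s ∈ S, x s with hf
  have h0 : f 0 = 0 := by simp [hf]
  have hadd : ∀ a b : I → ℝ, f (a + b) = f a + f b := by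
    intro a b; simp [hf, Finset.sum_add_distrib]
  have hsmul : ∀ (c : ℝ) (x : I → ℝ), f (c • x) = c * f x := by
    intro c x; simp [hf, Finset.mul_sum]
  set m : Finset I → ℝ := fun J => if (J ∩ S).Nonempty then y J else 0 with hm
  set Fa : Finset I → Set (I → ℝ) :=
    fun J => y J • simplexOf (if (J ∩ S).Nonempty then J ∩ S else J) with hFa
  have hmax : ∀ J ∈ Finset.univ.filter fun J : Finset I => J.Nonempty,
      IsMaxPt f (y J • simplexOf J) (m J) := by
    intro J hJ
    rw [Finset.mem_filter] at hJ
    by_cases h : (J ∩ S).Nonempty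
    · have := (isMaxPt_simplex_pos S J h).smul hsmul (hy J hJ.2)
      rw [mul_one] at this
      simpa [hm, h] using this
    · have hJS : J ∩ S = ∅ := Finset.not_nonempty_iff_eq_empty.1 h
      have := (isMaxPt_simplex_zero S J hJ.2 hJS).smul hsmul (hy J hJ.2)
      rw [mul_zero] at this
      simpa [hm, h] using this
  have hface : ∀ J ∈ Finset.univ.filter fun J : Finset I => J.Nonempty,
      faceAt f (y J • simplexOf J) (m J) = Fa J := by
    intro J hJ
    rw [Finset.mem_filter] at hJ
    by_cases h : (J ∩ S).Nonempty
    · have := faceAt_smul hsmul (isMaxPt_simplex_pos S J h) (hy J hJ.2)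
        (faceAt_simplex_pos S J h)
      rw [mul_one] at this
      simpa [hm, hFa, h] using this
    · have hJS : J ∩ S = ∅ := Finset.not_nonempty_iff_eq_empty.1 h
      have := faceAt_smul hsmul (isMaxPt_simplex_zero S J hJ.2 hJS) (hy J hJ.2)
        (faceAt_simplex_zero S J hJS)
      rw [mul_zero] at this
      simpa [hm, hFa, h] using this
  have hP := IsMaxPt.sum h0 hadd (Finset.univ.filter fun J : Finset I => J.Nonempty)
    (fun J => y J • simplexOf J) m hmax
  have step1 : {x ∈ (∑ J ∈ Finset.univ.filter fun J : Finset I => J.Nonempty,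
        y J • simplexOf J) |
      ∀ w ∈ (∑ J ∈ Finset.univ.filter fun J : Finset I => J.Nonempty, y J • simplexOf J),
        (∑ s ∈ S, w s) ≤ ∑ s ∈ S, x s} =
      ∑ J ∈ Finset.univ.filter fun J : Finset I => J.Nonempty, Fa J := by
    rw [argmax_eq_faceAt hP,
      faceAt_sum h0 hadd _ _ m hmax]
    exact Finset.sum_congr rfl hface
  rw [step1]
  -- split the index set
  have hsplit : (Finset.univ.filter fun J : Finset I => J.Nonempty) =
      (Finset.univ.filter fun J : Finset I => (J ∩ S).Nonempty) ∪
      (Finset.univ.filter fun J : Finset I => J.Nonempty ∧ J ⊆ T) := by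
    ext J
    simp only [Finset.mem_filter, Finset.mem_union, Finset.mem_univ, true_and]
    constructor
    · intro hJ
      by_cases h : (J ∩ S).Nonempty
      · exact Or.inl h
      · refine Or.inr ⟨hJ, fun j hj => ?_⟩
        have hju : j ∈ S ∪ T := by rw [hUnion]; exact Finset.mem_univ j
        rcases Finset.mem_union.1 hju with hjS | hjT
        · exact absurd ⟨j, Finset.mem_inter.2 ⟨hj, hjS⟩⟩ h
        · exact hjT
    · rintro (h | h)
      · obtain ⟨j, hj⟩ := h
        exact ⟨j, (Finset.mem_inter.1 hj).1⟩
      · exact h.1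
  have hdisj : Disjoint (Finset.univ.filter fun J : Finset I => (J ∩ S).Nonempty)
      (Finset.univ.filter fun J : Finset I => J.Nonempty ∧ J ⊆ T) := by
    rw [Finset.disjoint_left]
    intro J hJ1 hJ2
    rw [Finset.mem_filter] at hJ1 hJ2
    obtain ⟨j, hj⟩ := hJ1.2
    rw [Finset.mem_inter] at hj
    exact (Finset.disjoint_left.1 hST hj.2) (hJ2.2.2 hj.1)
  rw [hsplit, Finset.sum_union hdisj]
  congr 1
  · apply Finset.sum_congr rfl
    intro J hJ
    rw [Finset.mem_filter] at hJ
    simp [hFa, hJ.2]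
  · apply Finset.sum_congr rfl
    intro J hJ
    rw [Finset.mem_filter] at hJ
    have hJS : ¬(J ∩ S).Nonempty := by
      rw [Finset.not_nonempty_iff_eq_empty, ← Finset.disjoint_iff_inter_eq_empty]
      exact hST.symm.mono_left hJ.2.2
    simp [hFa, hJS]
end

section
/- Let I be a nonempty finite set and π a set partition of I. For S ⊆ I let π|_S denote the set partition of S whose blocks are the nonempty intersections p ∩ S for blocks p of π. For an ordered set partition (S_1, …, S_k) of I, let τ(S_1, …, S_k) be the set partition of I whose blocks are all the blocks of π|_{S_1}, …, π|_{S_k}. Then in the free ℤ-module on the set of set partitions of I, ∑ (−1)^k · [τ(S_1, …, S_k)], the sum over all ordered set partitions (S_1, …, S_k) of I, equals ∑_ρ (−1)^{b(ρ)} · (∏_{p ∈ π} n_p(ρ)!) · [ρ], where the sum is over all set partitions ρ of I refining π (every block of ρ is contained in a block of π), b(ρ) is the number of blocks of ρ, and n_p(ρ) is the number of blocks of ρ contained in the block p of π. -/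
open Finset

/-- A finset of finsets is a set partition of the (finite) ambient type: its blocks are
nonempty, pairwise disjoint, and their union is everything. -/
def IsSetPartition {I : Type*} [Fintype I] [DecidableEq I] (π : Finset (Finset I)) : Prop :=
  (∀ p ∈ π, p.Nonempty) ∧ (∀ p ∈ π, ∀ q ∈ π, p ≠ q → Disjoint p q) ∧
    π.biUnion id = Finset.univ

section Aux
open Function
set_option linter.unusedSectionVars false


universe u v
variable {X : Type u} [Fintype X] [DecidableEq X] {P : Type v} [DecidableEq P]

def Tset (g : X → P) (k : ℕ) : Finset (X → Fin k) :=
  univ.filter (fun f => Surjective f ∧ ∀ a b : X, a ≠ b → g a = g b → f a ≠ f b)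

lemma mem_Tset {g : X → P} {k : ℕ} {f : X → Fin k} :
    f ∈ Tset g k ↔ Surjective f ∧ ∀ a b : X, a ≠ b → g a = g b → f a ≠ f b := by
  simp [Tset]

lemma Tset_card_of_lt {g : X → P} {k : ℕ} (hk : Fintype.card X < k) : (Tset g k).card = 0 := by
  rw [Finset.card_eq_zero, Finset.eq_empty_iff_forall_notMem]
  intro f hf
  have := Fintype.card_le_of_surjective f (mem_Tset.mp hf).1
  simp only [Fintype.card_fin] at this
  omega

lemma Tset_zero_card_pos {g : X → P} (h : Fintype.card X = 0) : (Tset g 0).card = 1 := by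
  have hX : IsEmpty X := Fintype.card_eq_zero_iff.mp h
  rw [Tset, filter_true_of_mem, card_univ, Fintype.card_fun, h, pow_zero]
  intro f _
  exact ⟨fun y => y.elim0, fun a => hX.elim a⟩

lemma Tset_zero_card {g : X → P} (h : Fintype.card X ≠ 0) : (Tset g 0).card = 0 := by
  have h2 : Fintype.card (X → Fin 0) = 0 := by
    rw [Fintype.card_fun, Fintype.card_fin]; exact zero_pow h
  refine le_antisymm ?_ (Nat.zero_le _)
  calc (Tset g 0).card ≤ (univ : Finset (X → Fin 0)).card := by
        rw [Tset]; exact card_filter_le _ _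
    _ = 0 := by rw [card_univ, h2]

lemma fiber_card (g : X → P) (k : ℕ) {t : Finset X} (htne : t.Nonempty)
    (htr : ∀ a ∈ t, ∀ b ∈ t, g a = g b → a = b) :
    ((Tset g (k+1)).filter (fun f => univ.filter (fun x => f x = 0) = t)).card
      = (Tset (fun x : ↥(tᶜ) => g x.1) k).card := by
  refine Finset.card_bij'
    (fun f hf => fun x : ↥(tᶜ) => (f x.1).pred (by
      have h1 : univ.filter (fun y => f y = 0) = t := (mem_filter.mp hf).2
      have h2 : x.1 ∉ t := Finset.mem_compl.mp x.2
      intro h0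
      have h3 : x.1 ∈ univ.filter (fun y => f y = 0) := mem_filter.mpr ⟨mem_univ _, h0⟩
      rw [h1] at h3
      exact h2 h3))
    (fun f' _ => fun x => if h : x ∈ t then 0 else (f' ⟨x, Finset.mem_compl.mpr h⟩).succ)
    ?_ ?_ ?_ ?_
  · -- i maps into Tset restricted
    intro f hf
    have hfT := (mem_filter.mp hf).1
    have hfib := (mem_filter.mp hf).2
    have hsurj := (mem_Tset.mp hfT).1
    have hinj := (mem_Tset.mp hfT).2
    refine mem_Tset.mpr ⟨?_, ?_⟩
    · intro y
      obtain ⟨x, hx⟩ := hsurj y.succ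
      have hxt : x ∉ t := by
        intro hxt
        rw [← hfib] at hxt
        have : f x = 0 := (mem_filter.mp hxt).2
        rw [hx] at this
        exact Fin.succ_ne_zero y this
      refine ⟨⟨x, Finset.mem_compl.mpr hxt⟩, ?_⟩
      dsimp only
      have hsp : ∀ (hh : f x ≠ 0), ((f x).pred hh).succ = y.succ := by
        intro hh; rw [Fin.succ_pred, hx]
      exact Fin.succ_injective _ (hsp _)
    · intro a b hab hg hcontra
      have h1 : f a.1 = f b.1 := by
        have := congrArg Fin.succ hcontra
        rwa [Fin.succ_pred, Fin.succ_pred] at this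
      have hab' : a.1 ≠ b.1 := fun h => hab (Subtype.ext h)
      exact hinj a.1 b.1 hab' hg h1
  · -- j maps into the fiber
    intro f' hf'
    have hsurj := (mem_Tset.mp hf').1
    have hinj := (mem_Tset.mp hf').2
    have hfib : univ.filter (fun x =>
        (if h : x ∈ t then (0 : Fin (k+1)) else (f' ⟨x, Finset.mem_compl.mpr h⟩).succ) = 0) = t := by
      ext x
      simp only [mem_filter, mem_univ, true_and]
      by_cases h : x ∈ t
      · simp [h]
      · simp [h, Fin.succ_ne_zero]
    refine mem_filter.mpr ⟨mem_Tset.mpr ⟨?_, ?_⟩, hfib⟩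
    · intro y
      rcases Fin.eq_zero_or_eq_succ y with rfl | ⟨z, rfl⟩
      · obtain ⟨a, ha⟩ := htne
        exact ⟨a, by simp [ha]⟩
      · obtain ⟨x, hx⟩ := hsurj z
        refine ⟨x.1, ?_⟩
        dsimp only
        have hxt : x.1 ∉ t := Finset.mem_compl.mp x.2
        have hxx : (⟨x.1, Finset.mem_compl.mpr hxt⟩ : ↥(tᶜ)) = x := Subtype.ext rfl
        rw [dif_neg hxt, hxx, hx]
    · intro a b hab hg
      by_cases ha : a ∈ t <;> by_cases hb : b ∈ t
      · exact absurd (htr a ha b hb hg) hab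
      · simp only [dif_pos ha, dif_neg hb]
        exact fun h => Fin.succ_ne_zero _ h.symm
      · simp only [dif_neg ha, dif_pos hb]
        exact Fin.succ_ne_zero _
      · simp only [dif_neg ha, dif_neg hb]
        intro h
        have h2 := Fin.succ_injective _ h
        exact hinj ⟨a, Finset.mem_compl.mpr ha⟩ ⟨b, Finset.mem_compl.mpr hb⟩
          (fun hh => hab (congrArg Subtype.val hh)) hg h2
  · -- left inverse
    intro f hf
    have hfib := (mem_filter.mp hf).2
    funext x
    dsimp only
    by_cases h : x ∈ t
    · rw [dif_pos h]
      rw [← hfib] at h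
      exact ((mem_filter.mp h).2).symm
    · rw [dif_neg h]
      exact Fin.succ_pred _ _
  · -- right inverse
    intro f' hf'
    funext x
    dsimp only
    have hxt : x.1 ∉ t := Finset.mem_compl.mp x.2
    have hxx : (⟨x.1, Finset.mem_compl.mpr hxt⟩ : ↥(tᶜ)) = x := Subtype.ext rfl
    simp only [dif_neg hxt]
    rw [Fin.pred_succ, hxx]

lemma Tset_succ (g : X → P) (k : ℕ) :
    (Tset g (k+1)).card
      = ∑ t ∈ univ.filter (fun t : Finset X => t.Nonempty ∧ ∀ a ∈ t, ∀ b ∈ t, g a = g b → a = b),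
          (Tset (fun x : ↥(tᶜ) => g x.1) k).card := by
  rw [Finset.card_eq_sum_card_fiberwise (f := fun f => univ.filter (fun x => f x = 0))
    (t := univ.filter (fun t : Finset X => t.Nonempty ∧ ∀ a ∈ t, ∀ b ∈ t, g a = g b → a = b)) ?_]
  · refine Finset.sum_congr rfl (fun t ht => ?_)
    obtain ⟨-, htne, htr⟩ : t ∈ univ ∧ t.Nonempty ∧ _ := by simpa [mem_filter] using ht
    exact fiber_card g k htne htr
  · intro f hf
    obtain ⟨hsurj, hinj⟩ := mem_Tset.mp hf
    refine mem_filter.mpr ⟨mem_univ _, ?_, ?_⟩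
    · obtain ⟨x, hx⟩ := hsurj 0
      exact ⟨x, mem_filter.mpr ⟨mem_univ _, hx⟩⟩
    · intro a ha b hb hg
      by_contra hab
      exact hinj a b hab hg (by
        rw [(mem_filter.mp ha).2, (mem_filter.mp hb).2])

lemma card_filter_subtype (s : Finset X) (q : X → Prop) [DecidablePred q] :
    ((univ : Finset ↥s).filter (fun x => q x.1)).card = (s.filter q).card := by
  refine Finset.card_bij' (fun x _ => x.1) (fun x hx => ⟨x, (mem_filter.mp hx).1⟩) ?_ ?_ ?_ ?_
  · intro a ha
    exact mem_filter.mpr ⟨a.2, (mem_filter.mp ha).2⟩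
  · intro a ha
    exact mem_filter.mpr ⟨mem_univ _, (mem_filter.mp ha).2⟩
  · intro a _; rfl
  · intro a _; rfl

lemma image_subtype (s : Finset X) (h : X → P) :
    (univ : Finset ↥s).image (fun x => h x.1) = s.image h := by
  ext b
  simp only [mem_image, mem_univ, true_and]
  constructor
  · rintro ⟨x, hx⟩; exact ⟨x.1, x.2, hx⟩
  · rintro ⟨a, ha, hab⟩; exact ⟨⟨a, ha⟩, hab⟩

lemma neg_one_pow_sub {a b : ℕ} (h : b ≤ a) : (-1:ℤ)^(a-b) = (-1)^a * (-1)^b := by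
  conv_rhs => rw [← Nat.sub_add_cancel h]
  rw [pow_add, mul_assoc, ← mul_pow]
  simp

lemma transversal_count (g : X → P) {s : Finset P} (hsne : s.Nonempty) :
    ((univ.filter (fun t : Finset X => t.Nonempty ∧ ∀ a ∈ t, ∀ b ∈ t, g a = g b → a = b)).filter
        (fun t => t.image g = s)).card
      = ∏ p ∈ s, (univ.filter (fun x => g x = p)).card := by
  rw [← Finset.card_pi]
  refine Finset.card_bij'
    (fun t ht => fun p hp => Finset.choose (fun x => g x = p) t (by
      have h1 := mem_filter.mp ht
      have h2 := mem_filter.mp h1.1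
      obtain ⟨-, hne, htr⟩ : t ∈ univ ∧ t.Nonempty ∧ _ := ⟨h2.1, h2.2⟩
      have himg : t.image g = s := h1.2
      have hex : ∃ a ∈ t, g a = p := by
        rw [← himg] at hp
        simpa [mem_image] using hp
      obtain ⟨a, ha, hga⟩ := hex
      refine ⟨a, ⟨ha, hga⟩, ?_⟩
      rintro b ⟨hb, hgb⟩
      exact htr b hb a ha (hgb.trans hga.symm)))
    (fun F _ => s.attach.image (fun p => F p.1 p.2))
    ?_ ?_ ?_ ?_
  · -- maps into pi
    intro t ht
    rw [Finset.mem_pi]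
    intro p hp
    refine mem_filter.mpr ⟨mem_univ _, ?_⟩
    exact Finset.choose_property (fun x => g x = p) t _
  · -- maps into transversals with image s
    intro F hF
    rw [Finset.mem_pi] at hF
    have hmem : ∀ p (hp : p ∈ s), g (F p hp) = p := by
      intro p hp
      exact (mem_filter.mp (hF p hp)).2
    refine mem_filter.mpr ⟨mem_filter.mpr ⟨mem_univ _, ?_, ?_⟩, ?_⟩
    · obtain ⟨p, hp⟩ := hsne
      exact ⟨F p hp, mem_image.mpr ⟨⟨p, hp⟩, mem_attach _ _, rfl⟩⟩
    · intro a ha b hb hg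
      obtain ⟨⟨p, hp⟩, -, rfl⟩ := mem_image.mp ha
      obtain ⟨⟨q, hq⟩, -, rfl⟩ := mem_image.mp hb
      have : p = q := by rw [← hmem p hp, ← hmem q hq, hg]
      subst this
      rfl
    · ext p
      simp only [mem_image]
      constructor
      · rintro ⟨a, ⟨⟨q, hq⟩, -, rfl⟩, rfl⟩
        rw [hmem q hq]; exact hq
      · intro hp
        exact ⟨F p hp, ⟨⟨p, hp⟩, mem_attach _ _, rfl⟩, hmem p hp⟩
  · -- j (i t) = t
    intro t ht
    have h1 := mem_filter.mp ht
    have h2 := mem_filter.mp h1.1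
    have htr := h2.2.2
    have himg : t.image g = s := h1.2
    ext x
    simp only [mem_image]
    constructor
    · rintro ⟨⟨p, hp⟩, -, rfl⟩
      exact (Finset.choose_spec (fun x => g x = p) t _).1
    · intro hx
      have hgx : g x ∈ s := by rw [← himg]; exact mem_image.mpr ⟨x, hx, rfl⟩
      refine ⟨⟨g x, hgx⟩, mem_attach _ _, ?_⟩
      have hspec := Finset.choose_spec (fun y => g y = g x) t (by
        refine ⟨x, ⟨hx, rfl⟩, ?_⟩
        rintro b ⟨hb, hgb⟩
        exact htr b hb x hx hgb)
      exact htr _ hspec.1 x hx hspec.2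
  · -- i (j F) = F
    intro F hF
    rw [Finset.mem_pi] at hF
    have hmem : ∀ p (hp : p ∈ s), g (F p hp) = p := by
      intro p hp
      exact (mem_filter.mp (hF p hp)).2
    funext p hp
    have hspec := Finset.choose_spec (fun x => g x = p) (s.attach.image (fun q => F q.1 q.2)) (by
      refine ⟨F p hp, ⟨mem_image.mpr ⟨⟨p, hp⟩, mem_attach _ _, rfl⟩, hmem p hp⟩, ?_⟩
      rintro b ⟨hb, hgb⟩
      obtain ⟨⟨q, hq⟩, -, rfl⟩ := mem_image.mp hb
      have : q = p := by rw [← hmem q hq, hgb]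
      subst this
      rfl)
    obtain ⟨hmem', hg'⟩ := hspec
    obtain ⟨⟨q, hq⟩, -, heq⟩ := mem_image.mp hmem'
    rw [← heq] at hg' ⊢
    have : q = p := by rw [← hmem q hq, hg']
    subst this
    rfl

lemma keyB : ∀ (n : ℕ), ∀ {X : Type u} [Fintype X] [DecidableEq X] {P : Type v} [DecidableEq P]
    (g : X → P), Fintype.card X = n →
    ∑ k ∈ range (Fintype.card X + 1), (-1:ℤ)^k * ((Tset g k).card : ℤ)
      = (-1:ℤ)^(Fintype.card X) *
        ∏ p ∈ univ.image g, (((univ.filter (fun x => g x = p)).card).factorial : ℤ) := by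
  intro n
  induction n using Nat.strong_induction_on with
  | _ n IH =>
  intro X _ _ P _ g hn
  rcases Nat.eq_zero_or_pos n with rfl | hpos
  · have hX : IsEmpty X := Fintype.card_eq_zero_iff.mp hn
    rw [hn]
    simp only [zero_add, range_one, sum_singleton, pow_zero, one_mul]
    rw [Tset_zero_card_pos hn]
    have huniv : (univ : Finset X) = ∅ := univ_eq_empty
    rw [huniv, image_empty, prod_empty]
    norm_num
  · have hcard : Fintype.card X = n := hn
    have hXne : (univ : Finset X).Nonempty := by
      rw [← Finset.card_pos, card_univ, hcard]; exact hpos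
    have hSne : (univ.image g).Nonempty := hXne.image g
    set S := univ.image g with hS
    set np : P → ℕ := fun p => (univ.filter (fun x => g x = p)).card with hnp
    set TR := univ.filter
      (fun t : Finset X => t.Nonempty ∧ ∀ a ∈ t, ∀ b ∈ t, g a = g b → a = b) with hTR
    have hnppos : ∀ p ∈ S, 0 < np p := by
      intro p hp
      obtain ⟨x, -, hx⟩ := mem_image.mp hp
      rw [hnp]
      exact card_pos.mpr ⟨x, mem_filter.mpr ⟨mem_univ _, hx⟩⟩
    -- step 1 : peel off k = 0
    rw [hcard, Finset.sum_range_succ', Tset_zero_card (by rw [hcard]; omega)]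
    simp only [Nat.cast_zero, mul_zero, pow_zero, add_zero]
    -- step 2 : recursion + IH for each t
    have main : ∑ k ∈ range n, (-1:ℤ)^(k+1) * ((Tset g (k+1)).card : ℤ)
        = -∑ t ∈ TR, ((-1:ℤ)^(Fintype.card ↥(tᶜ)) *
            ∏ p ∈ (univ : Finset ↥(tᶜ)).image (fun x => g x.1),
              (((univ.filter (fun x : ↥(tᶜ) => g x.1 = p)).card).factorial : ℤ)) := by
      have h1 : ∀ k, ((Tset g (k+1)).card : ℤ) = ∑ t ∈ TR, ((Tset (fun x : ↥(tᶜ) => g x.1) k).card : ℤ) := by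
        intro k
        rw [Tset_succ g k]
        push_cast
        rfl
      calc ∑ k ∈ range n, (-1:ℤ)^(k+1) * ((Tset g (k+1)).card : ℤ)
          = -∑ k ∈ range n, (-1:ℤ)^k * ∑ t ∈ TR, ((Tset (fun x : ↥(tᶜ) => g x.1) k).card : ℤ) := by
            rw [← Finset.sum_neg_distrib]
            refine Finset.sum_congr rfl (fun k _ => ?_)
            rw [h1 k, pow_succ]
            ring
        _ = -∑ t ∈ TR, ∑ k ∈ range n, (-1:ℤ)^k * ((Tset (fun x : ↥(tᶜ) => g x.1) k).card : ℤ) := by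
            congr 1
            rw [Finset.sum_comm]
            exact Finset.sum_congr rfl (fun k _ => Finset.mul_sum _ _ _)
        _ = -∑ t ∈ TR, ((-1:ℤ)^(Fintype.card ↥(tᶜ)) *
              ∏ p ∈ (univ : Finset ↥(tᶜ)).image (fun x => g x.1),
                (((univ.filter (fun x : ↥(tᶜ) => g x.1 = p)).card).factorial : ℤ)) := by
            congr 1
            refine Finset.sum_congr rfl (fun t ht => ?_)
            obtain ⟨-, htne, htr⟩ : t ∈ univ ∧ t.Nonempty ∧ _ := by
              simpa [hTR, mem_filter] using ht
            have hm : Fintype.card ↥(tᶜ) = n - t.card := by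
              rw [Fintype.card_coe, Finset.card_compl, hcard]
            have htc : 1 ≤ t.card := Finset.card_pos.mpr htne
            have htcn : t.card ≤ n := by
              rw [← hcard]; exact (Finset.card_le_univ t).trans_eq card_univ
            have hsub : range (Fintype.card ↥(tᶜ) + 1) ⊆ range n := by
              apply Finset.range_subset_range.mpr
              omega
            rw [← Finset.sum_subset hsub ?vanish]
            · exact IH (Fintype.card ↥(tᶜ)) (by omega) _ rfl
            case vanish =>
              intro k hk hk2
              have : Fintype.card ↥(tᶜ) < k := by
                simp only [mem_range] at hk hk2
                omega
              rw [Tset_card_of_lt this]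
              norm_num
    rw [main]
    set SS := S.powerset.filter (fun s => s.Nonempty) with hSS
    have hWt : ∀ t ∈ TR, ((-1:ℤ)^(Fintype.card ↥(tᶜ)) *
        ∏ p ∈ (univ : Finset ↥(tᶜ)).image (fun x => g x.1),
          (((univ.filter (fun x : ↥(tᶜ) => g x.1 = p)).card).factorial : ℤ))
        = (-1:ℤ)^(n - (t.image g).card) *
          ∏ p ∈ S, (((np p - if p ∈ t.image g then 1 else 0).factorial : ℕ) : ℤ) := by
      intro t ht
      obtain ⟨-, htne, htr⟩ : t ∈ univ ∧ t.Nonempty ∧ _ := by simpa [hTR, mem_filter] using ht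
      have hm : Fintype.card ↥(tᶜ) = n - t.card := by
        rw [Fintype.card_coe, Finset.card_compl, hcard]
      have himage_card : (t.image g).card = t.card :=
        card_image_of_injOn (fun a ha b hb => htr a ha b hb)
      have himg : (univ : Finset ↥(tᶜ)).image (fun x => g x.1) = tᶜ.image g := image_subtype _ _
      have hfilter : ∀ p : P, ((univ : Finset ↥(tᶜ)).filter (fun x => g x.1 = p)).card
          = (tᶜ.filter (fun x => g x = p)).card := fun p => card_filter_subtype (tᶜ) (fun x => g x = p)
      have hcnt : ∀ p ∈ S, (tᶜ.filter (fun x => g x = p)).card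
          = np p - (if p ∈ t.image g then 1 else 0) := by
        intro p hp
        have hdisj : Disjoint (t.filter (fun x => g x = p)) (tᶜ.filter (fun x => g x = p)) :=
          Finset.disjoint_filter_filter disjoint_compl_right
        have hsplit : (t.filter (fun x => g x = p)).card
            + (tᶜ.filter (fun x => g x = p)).card = np p := by
          rw [hnp]
          rw [← Finset.card_union_of_disjoint hdisj, ← Finset.filter_union, Finset.union_compl]
        have htpart : (t.filter (fun x => g x = p)).card = if p ∈ t.image g then 1 else 0 := by
          by_cases hp2 : p ∈ t.image g
          · rw [if_pos hp2]
            obtain ⟨a, ha, hga⟩ := mem_image.mp hp2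
            rw [Finset.card_eq_one]
            refine ⟨a, ?_⟩
            ext x
            simp only [mem_filter, mem_singleton]
            constructor
            · rintro ⟨hx, hgx⟩
              exact htr x hx a ha (hgx.trans hga.symm)
            · rintro rfl
              exact ⟨ha, hga⟩
          · rw [if_neg hp2, Finset.card_eq_zero, Finset.filter_eq_empty_iff]
            intro x hx hgx
            exact hp2 (mem_image.mpr ⟨x, hx, hgx⟩)
        omega
      rw [hm, himg, himage_card]
      congr 1
      have hsubset : tᶜ.image g ⊆ S := by
        rw [hS]; exact image_subset_image (subset_univ _)
      rw [← Finset.prod_subset hsubset ?hone]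
      · refine Finset.prod_congr rfl (fun p hp => ?_)
        rw [hfilter p, hcnt p (hsubset hp)]
      case hone =>
        intro p hp hp2
        have h0 : (tᶜ.filter (fun x => g x = p)).card = 0 := by
          rw [Finset.card_eq_zero, Finset.filter_eq_empty_iff]
          intro x hx hgx
          exact hp2 (mem_image.mpr ⟨x, hx, hgx⟩)
        rw [← hcnt p hp, h0, Nat.factorial_zero, Nat.cast_one]
    rw [Finset.sum_congr rfl hWt]
    have hmaps : ∀ t ∈ TR, t.image g ∈ SS := by
      intro t ht
      obtain ⟨-, htne, htr⟩ : t ∈ univ ∧ t.Nonempty ∧ _ := by simpa [hTR, mem_filter] using ht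
      refine mem_filter.mpr ⟨mem_powerset.mpr ?_, htne.image g⟩
      rw [hS]; exact image_subset_image (subset_univ _)
    rw [← Finset.sum_fiberwise_of_maps_to hmaps]
    have hper : ∀ s ∈ SS,
        (∑ t ∈ TR.filter (fun t => t.image g = s),
          ((-1:ℤ)^(n - (t.image g).card) *
            ∏ p ∈ S, (((np p - if p ∈ t.image g then 1 else 0).factorial : ℕ) : ℤ)))
        = (-1:ℤ)^n * (-1:ℤ)^(s.card) * ∏ p ∈ S, ((np p).factorial : ℤ) := by
      intro s hs
      obtain ⟨hsP, hsne⟩ := mem_filter.mp hs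
      have hsS : s ⊆ S := mem_powerset.mp hsP
      have hscard : s.card ≤ n := by
        calc s.card ≤ S.card := card_le_card hsS
          _ ≤ (univ : Finset X).card := by rw [hS]; exact card_image_le
          _ = n := by rw [card_univ, hcard]
      have hconst : ∀ t ∈ TR.filter (fun t => t.image g = s),
          ((-1:ℤ)^(n - (t.image g).card) *
            ∏ p ∈ S, (((np p - if p ∈ t.image g then 1 else 0).factorial : ℕ) : ℤ))
          = (-1:ℤ)^(n - s.card) *
            ∏ p ∈ S, (((np p - if p ∈ s then 1 else 0).factorial : ℕ) : ℤ) := by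
        intro t ht
        rw [(mem_filter.mp ht).2]
      rw [Finset.sum_congr rfl hconst, Finset.sum_const]
      have hcount : (TR.filter (fun t => t.image g = s)).card = ∏ p ∈ s, np p := by
        rw [hTR, hnp]
        exact transversal_count g hsne
      rw [hcount, nsmul_eq_mul]
      push_cast
      have hprodS : (∏ p ∈ S, (((np p - if p ∈ s then 1 else 0).factorial : ℕ) : ℤ))
          = (∏ p ∈ S \ s, ((np p).factorial : ℤ)) * ∏ p ∈ s, (((np p - 1).factorial : ℕ) : ℤ) := by
        rw [← Finset.prod_sdiff hsS]
        congr 1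
        · refine Finset.prod_congr rfl (fun p hp => ?_)
          rw [if_neg (mem_sdiff.mp hp).2, Nat.sub_zero]
        · refine Finset.prod_congr rfl (fun p hp => ?_)
          rw [if_pos hp]
      have hms : (∏ p ∈ s, (np p : ℤ)) * ∏ p ∈ s, (((np p - 1).factorial : ℕ) : ℤ)
          = ∏ p ∈ s, ((np p).factorial : ℤ) := by
        rw [← Finset.prod_mul_distrib]
        refine Finset.prod_congr rfl (fun p hp => ?_)
        have := Nat.mul_factorial_pred (hnppos p (hsS hp)).ne'
        exact_mod_cast congrArg (Nat.cast : ℕ → ℤ) this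
      rw [hprodS, neg_one_pow_sub hscard]
      calc (∏ p ∈ s, (np p : ℤ)) * ((-1:ℤ)^n * (-1:ℤ)^(s.card) *
            ((∏ p ∈ S \ s, ((np p).factorial : ℤ)) * ∏ p ∈ s, (((np p - 1).factorial : ℕ) : ℤ)))
          = (-1:ℤ)^n * (-1:ℤ)^(s.card) *
            ((∏ p ∈ S \ s, ((np p).factorial : ℤ)) *
              ((∏ p ∈ s, (np p : ℤ)) * ∏ p ∈ s, (((np p - 1).factorial : ℕ) : ℤ))) := by ring
        _ = (-1:ℤ)^n * (-1:ℤ)^(s.card) * ∏ p ∈ S, ((np p).factorial : ℤ) := by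
            rw [hms, Finset.prod_sdiff hsS]
    rw [Finset.sum_congr rfl hper]
    have hSSsum : ∑ s ∈ SS, ((-1:ℤ))^(s.card) = -1 := by
      have h0 : ∑ s ∈ S.powerset, ((-1:ℤ))^(s.card) = 0 := by
        rw [Finset.sum_powerset_neg_one_pow_card, if_neg hSne.ne_empty]
      have hsplit := Finset.sum_filter_add_sum_filter_not S.powerset
        (fun s => s.Nonempty) (fun s => ((-1:ℤ))^(s.card))
      have hempty : S.powerset.filter (fun s => ¬ s.Nonempty) = {∅} := by
        ext u
        simp only [mem_filter, mem_powerset, mem_singleton, Finset.not_nonempty_iff_eq_empty]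
        constructor
        · rintro ⟨-, rfl⟩; rfl
        · rintro rfl; exact ⟨empty_subset _, rfl⟩
      rw [hempty] at hsplit
      simp only [sum_singleton, card_empty, pow_zero] at hsplit
      rw [← hSS] at hsplit
      omega
    calc -∑ s ∈ SS, ((-1:ℤ)^n * (-1:ℤ)^(s.card) * ∏ p ∈ S, ((np p).factorial : ℤ))
        = -(((-1:ℤ)^n * ∏ p ∈ S, ((np p).factorial : ℤ)) * ∑ s ∈ SS, ((-1:ℤ))^(s.card)) := by
          rw [Finset.mul_sum]
          congr 1
          refine Finset.sum_congr rfl (fun s hs => ?_)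
          ring
      _ = (-1:ℤ)^n * ∏ p ∈ S, ((np p).factorial : ℤ) := by
          rw [hSSsum]; ring

section PartA
variable {I : Type u} [Fintype I] [DecidableEq I]

lemma part_unique {π : Finset (Finset I)} (hd : ∀ p ∈ π, ∀ q ∈ π, p ≠ q → Disjoint p q)
    {p q : Finset I} {x : I} (hp : p ∈ π) (hq : q ∈ π) (hxp : x ∈ p) (hxq : x ∈ q) : p = q := by
  by_contra h
  exact (Finset.disjoint_left.mp (hd p hp q hq h)) hxp hxq

lemma part_cover {π : Finset (Finset I)} (h : π.biUnion id = univ) (x : I) :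
    ∃ p ∈ π, x ∈ p := by
  have hx : x ∈ π.biUnion id := by rw [h]; exact mem_univ x
  simpa using hx

lemma blockOf_exists_unique {π ρ : Finset (Finset I)}
    (hπ2 : ∀ p ∈ π, ∀ q ∈ π, p ≠ q → Disjoint p q)
    (hρ1 : ∀ b ∈ ρ, b.Nonempty) (href : ∀ b ∈ ρ, ∃ p ∈ π, b ⊆ p) {b : Finset I} (hb : b ∈ ρ) :
    ∃! p, p ∈ π ∧ b ⊆ p := by
  obtain ⟨p, hp, hbp⟩ := href b hb
  refine ⟨p, ⟨hp, hbp⟩, ?_⟩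
  rintro q ⟨hq, hbq⟩
  obtain ⟨x, hx⟩ := hρ1 b hb
  exact part_unique hπ2 hq hp (hbq hx) (hbp hx)


lemma partA (π ρ : Finset (Finset I))
    (hπ1 : ∀ p ∈ π, p.Nonempty)
    (hπ2 : ∀ p ∈ π, ∀ q ∈ π, p ≠ q → Disjoint p q)
    (hπ3 : π.biUnion id = univ)
    (hρ1 : ∀ b ∈ ρ, b.Nonempty) (hρ2 : ∀ b ∈ ρ, ∀ c ∈ ρ, b ≠ c → Disjoint b c)
    (hρ3 : ρ.biUnion id = univ)
    (href : ∀ b ∈ ρ, ∃ p ∈ π, b ⊆ p) (k : ℕ) :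
    ((univ : Finset (Fin k → Finset I)).filter
        (fun C => ((∀ i, (C i).Nonempty) ∧ (∀ i j, i ≠ j → Disjoint (C i) (C j)) ∧
            Finset.univ.biUnion C = Finset.univ) ∧
          (Finset.univ : Finset (Fin k)).biUnion
            (fun i => (π.image (· ∩ C i)).filter (·.Nonempty)) = ρ)).card
      = (Tset (fun b : ↥ρ => Finset.choose (fun p => b.1 ⊆ p) π
          (blockOf_exists_unique hπ2 hρ1 href b.2)) k).card := by
  set g : ↥ρ → Finset I := fun b => Finset.choose (fun p => b.1 ⊆ p) π
    (blockOf_exists_unique hπ2 hρ1 href b.2) with hgdef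
  have hgπ : ∀ b : ↥ρ, g b ∈ π := fun b => Finset.choose_mem _ _ _
  have hgsub : ∀ b : ↥ρ, b.1 ⊆ g b := fun b => Finset.choose_property _ _ _
  set L := (univ : Finset (Fin k → Finset I)).filter
      (fun C => ((∀ i, (C i).Nonempty) ∧ (∀ i j, i ≠ j → Disjoint (C i) (C j)) ∧
          Finset.univ.biUnion C = Finset.univ) ∧
        (Finset.univ : Finset (Fin k)).biUnion
          (fun i => (π.image (· ∩ C i)).filter (·.Nonempty)) = ρ) with hL
  have hmemL : ∀ C : Fin k → Finset I, C ∈ L ↔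
      ((∀ i, (C i).Nonempty) ∧ (∀ i j, i ≠ j → Disjoint (C i) (C j)) ∧
          Finset.univ.biUnion C = Finset.univ) ∧
        (Finset.univ : Finset (Fin k)).biUnion
          (fun i => (π.image (· ∩ C i)).filter (·.Nonempty)) = ρ := by
    intro C; rw [hL, mem_filter]; simp
  have hmemτ : ∀ (C : Fin k → Finset I) (b : Finset I),
      b ∈ (univ : Finset (Fin k)).biUnion
          (fun i => (π.image (· ∩ C i)).filter (·.Nonempty))
        ↔ ∃ i, (∃ p ∈ π, p ∩ C i = b) ∧ b.Nonempty := by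
    intro C b
    simp [mem_biUnion, mem_filter, mem_image]
  -- uniqueness of the part containing a block
  have hEU : ∀ C : Fin k → Finset I, C ∈ L → ∀ b : ↥ρ,
      ∃! i : Fin k, i ∈ (univ : Finset (Fin k)) ∧ b.1 ⊆ C i := by
    intro C hC b
    obtain ⟨⟨hC1, hC2, hC3⟩, hτ⟩ := (hmemL C).mp hC
    have hbτ : b.1 ∈ (univ : Finset (Fin k)).biUnion
        (fun i => (π.image (· ∩ C i)).filter (·.Nonempty)) := by rw [hτ]; exact b.2
    obtain ⟨i, ⟨p, hp, hpc⟩, hbne⟩ := (hmemτ C b.1).mp hbτ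
    have hbCi : b.1 ⊆ C i := by rw [← hpc]; exact inter_subset_right
    refine ⟨i, ⟨mem_univ _, hbCi⟩, ?_⟩
    rintro j ⟨-, hbCj⟩
    obtain ⟨x, hx⟩ := hρ1 b.1 b.2
    by_contra hij
    exact (Finset.disjoint_left.mp (hC2 j i hij)) (hbCj hx) (hbCi hx)
  refine Finset.card_bij'
    (fun C hC => fun b : ↥ρ => Finset.choose (fun i => b.1 ⊆ C i) univ (hEU C hC b))
    (fun f _ => fun i => (univ.filter (fun b : ↥ρ => f b = i)).biUnion (fun b => b.1))
    ?_ ?_ ?_ ?_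
  · -- i maps into Tset
    intro C hC
    obtain ⟨⟨hC1, hC2, hC3⟩, hτ⟩ := (hmemL C).mp hC
    have hfC : ∀ b : ↥ρ, b.1 ⊆ C (Finset.choose (fun i => b.1 ⊆ C i) univ (hEU C hC b)) :=
      fun b => Finset.choose_property (fun i => b.1 ⊆ C i) univ (hEU C hC b)
    have hfu : ∀ (b : ↥ρ) (i : Fin k), b.1 ⊆ C i →
        Finset.choose (fun i => b.1 ⊆ C i) univ (hEU C hC b) = i :=
      fun b i hbi => (hEU C hC b).unique ⟨mem_univ _, hfC b⟩ ⟨mem_univ _, hbi⟩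
    refine mem_Tset.mpr ⟨?_, ?_⟩
    · intro i
      obtain ⟨x, hx⟩ := hC1 i
      obtain ⟨b, hb, hxb⟩ := part_cover hρ3 x
      have hbτ : b ∈ (univ : Finset (Fin k)).biUnion
          (fun i => (π.image (· ∩ C i)).filter (·.Nonempty)) := by rw [hτ]; exact hb
      obtain ⟨j, ⟨p, hp, hpc⟩, hbne⟩ := (hmemτ C b).mp hbτ
      have hbCj : b ⊆ C j := by rw [← hpc]; exact inter_subset_right
      have hij : j = i := by
        by_contra hij
        exact (Finset.disjoint_left.mp (hC2 j i hij)) (hbCj hxb) hx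
      exact ⟨⟨b, hb⟩, hfu ⟨b, hb⟩ i (hij ▸ hbCj)⟩
    · intro a b hab hg hcontra
      have hcontra' : Finset.choose (fun i => a.1 ⊆ C i) univ (hEU C hC a)
          = Finset.choose (fun i => b.1 ⊆ C i) univ (hEU C hC b) := hcontra
      set i := Finset.choose (fun j => a.1 ⊆ C j) univ (hEU C hC a) with hi
      have haCi : a.1 ⊆ C i := hfC a
      have hbCi : b.1 ⊆ C i := by rw [hcontra']; exact hfC b
      have hq : g a ∩ C i ∈ ρ := by
        rw [← hτ]
        refine (hmemτ C _).mpr ⟨i, ⟨g a, hgπ a, rfl⟩, ?_⟩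
        obtain ⟨x, hx⟩ := hρ1 a.1 a.2
        exact ⟨x, mem_inter.mpr ⟨hgsub a hx, haCi hx⟩⟩
      have hga : a.1 = g a ∩ C i := by
        have hsub1 : a.1 ⊆ g a ∩ C i := fun x hx => mem_inter.mpr ⟨hgsub a hx, haCi hx⟩
        obtain ⟨x, hx⟩ := hρ1 a.1 a.2
        exact part_unique hρ2 a.2 hq hx (hsub1 hx)
      have hgb : b.1 = g a ∩ C i := by
        have hsub1 : b.1 ⊆ g a ∩ C i := fun x hx =>
          mem_inter.mpr ⟨by rw [hg]; exact hgsub b hx, hbCi hx⟩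
        obtain ⟨x, hx⟩ := hρ1 b.1 b.2
        exact part_unique hρ2 b.2 hq hx (hsub1 hx)
      exact hab (Subtype.ext (hga.trans hgb.symm))
  · -- j maps into L
    intro f hf
    have hsurj := (mem_Tset.mp hf).1
    have hinj := (mem_Tset.mp hf).2
    have hmemC : ∀ (i : Fin k) (x : I),
        x ∈ (univ.filter (fun b : ↥ρ => f b = i)).biUnion (fun b => b.1)
          ↔ ∃ b : ↥ρ, f b = i ∧ x ∈ b.1 := by
      intro i x; simp [mem_biUnion]
    refine (hmemL _).mpr ⟨⟨?_, ?_, ?_⟩, ?_⟩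
    · intro i
      obtain ⟨b, hb⟩ := hsurj i
      obtain ⟨x, hx⟩ := hρ1 b.1 b.2
      exact ⟨x, (hmemC i x).mpr ⟨b, hb, hx⟩⟩
    · intro i j hij
      rw [Finset.disjoint_left]
      intro x hxi hxj
      obtain ⟨b, hbf, hxb⟩ := (hmemC i x).mp hxi
      obtain ⟨c, hcf, hxc⟩ := (hmemC j x).mp hxj
      have hbc : b = c := Subtype.ext (part_unique hρ2 b.2 c.2 hxb hxc)
      subst hbc
      exact hij (hbf.symm.trans hcf)
    · apply Finset.eq_univ_of_forall
      intro x
      obtain ⟨b, hb, hxb⟩ := part_cover hρ3 x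
      refine mem_biUnion.mpr ⟨f ⟨b, hb⟩, mem_univ _, ?_⟩
      exact (hmemC _ x).mpr ⟨⟨b, hb⟩, rfl, hxb⟩
    · ext b'
      rw [hmemτ]
      constructor
      · rintro ⟨i, ⟨p, hp, hpc⟩, hbne⟩
        obtain ⟨x, hx⟩ := hbne
        have hx2 : x ∈ p ∩ (univ.filter (fun b : ↥ρ => f b = i)).biUnion (fun b => b.1) := by
          rw [hpc]; exact hx
        obtain ⟨hxp, hxC⟩ := mem_inter.mp hx2
        obtain ⟨c, hcf, hxc⟩ := (hmemC i x).mp hxC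
        have hgc : g c = p := part_unique hπ2 (hgπ c) hp (hgsub c hxc) hxp
        have heq : b' = c.1 := by
          apply Finset.Subset.antisymm
          · intro y hy
            have hy2 : y ∈ p ∩ (univ.filter (fun b : ↥ρ => f b = i)).biUnion (fun b => b.1) := by
              rw [hpc]; exact hy
            obtain ⟨hyp, hyC⟩ := mem_inter.mp hy2
            obtain ⟨d, hdf, hyd⟩ := (hmemC i y).mp hyC
            have hgd : g d = g c := by
              rw [hgc]
              exact part_unique hπ2 (hgπ d) hp (hgsub d hyd) hyp
            have hdc : d = c := by
              by_contra hne
              exact (hinj d c hne hgd) (hdf.trans hcf.symm)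
            exact hdc ▸ hyd
          · intro y hy
            rw [← hpc]
            refine mem_inter.mpr ⟨by rw [← hgc]; exact hgsub c hy, ?_⟩
            exact (hmemC i y).mpr ⟨c, hcf, hy⟩
        rw [heq]; exact c.2
      · intro hb'
        refine ⟨f ⟨b', hb'⟩, ⟨g ⟨b', hb'⟩, hgπ ⟨b', hb'⟩, ?_⟩, hρ1 b' hb'⟩
        apply Finset.Subset.antisymm
        · intro y hy
          obtain ⟨hyg, hyC⟩ := mem_inter.mp hy
          obtain ⟨d, hdf, hyd⟩ := (hmemC (f ⟨b', hb'⟩) y).mp hyC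
          have hgd : g d = g ⟨b', hb'⟩ :=
            part_unique hπ2 (hgπ d) (hgπ ⟨b', hb'⟩) (hgsub d hyd) hyg
          have hdc : d = ⟨b', hb'⟩ := by
            by_contra hne
            exact (hinj d ⟨b', hb'⟩ hne hgd) hdf
          rw [hdc] at hyd
          exact hyd
        · intro y hy
          refine mem_inter.mpr ⟨hgsub ⟨b', hb'⟩ hy, ?_⟩
          exact (hmemC _ y).mpr ⟨⟨b', hb'⟩, rfl, hy⟩
  · -- left inverse
    intro C hC
    obtain ⟨⟨hC1, hC2, hC3⟩, hτ⟩ := (hmemL C).mp hC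
    have hfC : ∀ b : ↥ρ, b.1 ⊆ C (Finset.choose (fun i => b.1 ⊆ C i) univ (hEU C hC b)) :=
      fun b => Finset.choose_property (fun i => b.1 ⊆ C i) univ (hEU C hC b)
    funext i
    dsimp only
    ext x
    simp only [mem_biUnion, mem_filter, mem_univ, true_and]
    constructor
    · rintro ⟨b, hbf, hxb⟩
      exact (hbf ▸ hfC b) hxb
    · intro hx
      obtain ⟨b, hb, hxb⟩ := part_cover hρ3 x
      have hbτ : b ∈ (univ : Finset (Fin k)).biUnion
          (fun i => (π.image (· ∩ C i)).filter (·.Nonempty)) := by rw [hτ]; exact hb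
      obtain ⟨j, ⟨p, hp, hpc⟩, hbne⟩ := (hmemτ C b).mp hbτ
      have hbCj : b ⊆ C j := by rw [← hpc]; exact inter_subset_right
      have hji : j = i := by
        by_contra hne
        exact (Finset.disjoint_left.mp (hC2 j i hne)) (hbCj hxb) hx
      refine ⟨⟨b, hb⟩, ?_, hxb⟩
      exact (hEU C hC ⟨b, hb⟩).unique ⟨mem_univ _, hfC ⟨b, hb⟩⟩ ⟨mem_univ _, hji ▸ hbCj⟩
  · -- right inverse
    intro f hf
    have hinj := (mem_Tset.mp hf).2
    funext b
    dsimp only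
    have huniq : ∀ i : Fin k,
        b.1 ⊆ (univ.filter (fun c : ↥ρ => f c = i)).biUnion (fun c => c.1) → i = f b := by
      intro i hsub
      obtain ⟨x, hx⟩ := hρ1 b.1 b.2
      have hxC := hsub hx
      simp only [mem_biUnion, mem_filter, mem_univ, true_and] at hxC
      obtain ⟨c, hcf, hxc⟩ := hxC
      have hcb : c = b := Subtype.ext (part_unique hρ2 c.2 b.2 hxc hx)
      rw [← hcf, hcb]
    exact huniq _ (Finset.choose_property
      (fun i => b.1 ⊆ (univ.filter (fun c : ↥ρ => f c = i)).biUnion (fun c => c.1)) univ _)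

end PartA
end Aux

/-- The antipode formula for set partitions. -/
theorem stmt19 {I : Type*} [Fintype I] [DecidableEq I] [Nonempty I]
    (π : Finset (Finset I)) (hπ : IsSetPartition π) :
    (∑ k ∈ Finset.range (Fintype.card I + 1),
        ∑ C ∈ (Finset.univ : Finset (Fin k → Finset I)).filter
            (fun C => (∀ i, (C i).Nonempty) ∧
              (∀ i j, i ≠ j → Disjoint (C i) (C j)) ∧
              Finset.univ.biUnion C = Finset.univ),
          Finsupp.single
            ((Finset.univ : Finset (Fin k)).biUnion
              (fun i => (π.image (· ∩ C i)).filter (·.Nonempty)))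
            ((-1 : ℤ) ^ k)) =
      ∑ ρ ∈ (Finset.univ : Finset (Finset (Finset I))).filter
          (fun ρ => ((∀ p ∈ ρ, p.Nonempty) ∧ (∀ p ∈ ρ, ∀ q ∈ ρ, p ≠ q → Disjoint p q) ∧
              ρ.biUnion id = Finset.univ) ∧
            ∀ b ∈ ρ, ∃ p ∈ π, b ⊆ p),
        Finsupp.single ρ
          ((-1 : ℤ) ^ ρ.card *
            ∏ p ∈ π, (((ρ.filter fun b => b ⊆ p).card).factorial : ℤ)) := by
  obtain ⟨hπ1, hπ2, hπ3⟩ := hπ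
  set N := Fintype.card I with hN
  set R := (Finset.univ : Finset (Finset (Finset I))).filter
      (fun ρ => ((∀ p ∈ ρ, p.Nonempty) ∧ (∀ p ∈ ρ, ∀ q ∈ ρ, p ≠ q → Disjoint p q) ∧
          ρ.biUnion id = Finset.univ) ∧
        ∀ b ∈ ρ, ∃ p ∈ π, b ⊆ p) with hR
  -- τ C lands in R
  have hτR : ∀ (k : ℕ) (C : Fin k → Finset I),
      (∀ i, (C i).Nonempty) → (∀ i j, i ≠ j → Disjoint (C i) (C j)) →
      Finset.univ.biUnion C = Finset.univ →
      ((Finset.univ : Finset (Fin k)).biUnion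
        (fun i => (π.image (· ∩ C i)).filter (·.Nonempty))) ∈ R := by
    intro k C hC1 hC2 hC3
    have hmemρ : ∀ b : Finset I,
        b ∈ (Finset.univ : Finset (Fin k)).biUnion
            (fun i => (π.image (· ∩ C i)).filter (·.Nonempty))
          ↔ ∃ i, (∃ p ∈ π, p ∩ C i = b) ∧ b.Nonempty := by
      intro b; simp [mem_biUnion, mem_filter, mem_image]
    rw [hR, mem_filter]
    refine ⟨mem_univ _, ⟨?_, ?_, ?_⟩, ?_⟩
    · intro b hb
      exact ((hmemρ b).mp hb).choose_spec.2
    · intro b hb c hc hbc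
      rw [Finset.disjoint_left]
      intro x hxb hxc
      obtain ⟨i, ⟨p, hp, hpc⟩, -⟩ := (hmemρ b).mp hb
      obtain ⟨j, ⟨q, hq, hqc⟩, -⟩ := (hmemρ c).mp hc
      have hxb' : x ∈ p ∩ C i := by rw [hpc]; exact hxb
      have hxc' : x ∈ q ∩ C j := by rw [hqc]; exact hxc
      obtain ⟨hxp, hxCi⟩ := mem_inter.mp hxb'
      obtain ⟨hxq, hxCj⟩ := mem_inter.mp hxc'
      have hpq : p = q := part_unique hπ2 hp hq hxp hxq
      have hij : i = j := by
        by_contra hne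
        exact (Finset.disjoint_left.mp (hC2 i j hne)) hxCi hxCj
      exact hbc (by rw [← hpc, ← hqc, hpq, hij])
    · apply Finset.eq_univ_of_forall
      intro x
      obtain ⟨p, hp, hxp⟩ := part_cover hπ3 x
      have hx2 : x ∈ Finset.univ.biUnion C := by rw [hC3]; exact mem_univ x
      obtain ⟨i, -, hxi⟩ := mem_biUnion.mp hx2
      refine mem_biUnion.mpr ⟨p ∩ C i, ?_, ?_⟩
      · exact (hmemρ _).mpr ⟨i, ⟨p, hp, rfl⟩, ⟨x, mem_inter.mpr ⟨hxp, hxi⟩⟩⟩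
      · exact mem_inter.mpr ⟨hxp, hxi⟩
    · intro b hb
      obtain ⟨i, ⟨p, hp, hpc⟩, -⟩ := (hmemρ b).mp hb
      exact ⟨p, hp, by rw [← hpc]; exact inter_subset_left⟩
  -- the per-refinement coefficient
  have hcoef : ∀ ρ ∈ R, ∑ k ∈ Finset.range (N + 1),
      ((((Finset.univ : Finset (Fin k → Finset I)).filter
        (fun C => ((∀ i, (C i).Nonempty) ∧ (∀ i j, i ≠ j → Disjoint (C i) (C j)) ∧
            Finset.univ.biUnion C = Finset.univ) ∧
          (Finset.univ : Finset (Fin k)).biUnion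
            (fun i => (π.image (· ∩ C i)).filter (·.Nonempty)) = ρ)).card : ℤ) * (-1)^k)
      = (-1 : ℤ) ^ ρ.card *
          ∏ p ∈ π, (((ρ.filter fun b => b ⊆ p).card).factorial : ℤ) := by
    intro ρ hρmem
    rw [hR, mem_filter] at hρmem
    obtain ⟨-, ⟨hρ1, hρ2, hρ3⟩, href⟩ := hρmem
    have hgπ : ∀ b : ↥ρ, Finset.choose (fun p => b.1 ⊆ p) π
        (blockOf_exists_unique hπ2 hρ1 href b.2) ∈ π :=
      fun b => Finset.choose_mem _ _ _
    have hgsub : ∀ b : ↥ρ, b.1 ⊆ Finset.choose (fun p => b.1 ⊆ p) π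
        (blockOf_exists_unique hπ2 hρ1 href b.2) :=
      fun b => Finset.choose_property _ _ _
    have hcoe : Fintype.card ↥ρ = ρ.card := Fintype.card_coe ρ
    have hρcard : ρ.card ≤ N := by
      have h1 : ∑ b ∈ ρ, b.card = Fintype.card I := by
        have h2 := Finset.card_biUnion (s := ρ) (t := id)
          (fun b hb c hc hbc => hρ2 b hb c hc hbc)
        rw [hρ3, card_univ] at h2
        simpa using h2.symm
      calc ρ.card = ∑ _b ∈ ρ, 1 := by rw [Finset.card_eq_sum_ones]
        _ ≤ ∑ b ∈ ρ, b.card :=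
            Finset.sum_le_sum (fun b hb => Finset.card_pos.mpr (hρ1 b hb))
        _ = N := h1
    calc ∑ k ∈ Finset.range (N + 1),
        ((((Finset.univ : Finset (Fin k → Finset I)).filter
          (fun C => ((∀ i, (C i).Nonempty) ∧ (∀ i j, i ≠ j → Disjoint (C i) (C j)) ∧
              Finset.univ.biUnion C = Finset.univ) ∧
            (Finset.univ : Finset (Fin k)).biUnion
              (fun i => (π.image (· ∩ C i)).filter (·.Nonempty)) = ρ)).card : ℤ) * (-1)^k)
        = ∑ k ∈ Finset.range (N + 1), (-1:ℤ)^k *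
            ((Tset (fun b : ↥ρ => Finset.choose (fun p => b.1 ⊆ p) π
              (blockOf_exists_unique hπ2 hρ1 href b.2)) k).card : ℤ) := by
          refine Finset.sum_congr rfl fun k _ => ?_
          rw [partA π ρ hπ1 hπ2 hπ3 hρ1 hρ2 hρ3 href k, mul_comm]
      _ = ∑ k ∈ Finset.range (Fintype.card ↥ρ + 1), (-1:ℤ)^k *
            ((Tset (fun b : ↥ρ => Finset.choose (fun p => b.1 ⊆ p) π
              (blockOf_exists_unique hπ2 hρ1 href b.2)) k).card : ℤ) := by
          symm
          apply Finset.sum_subset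
          · apply Finset.range_subset_range.mpr
            rw [hcoe]; omega
          · intro k hk hk2
            have hklt : Fintype.card ↥ρ < k := by
              simp only [mem_range] at hk hk2; omega
            rw [Tset_card_of_lt hklt]
            norm_num
      _ = (-1:ℤ)^(Fintype.card ↥ρ) *
            ∏ p ∈ univ.image (fun b : ↥ρ => Finset.choose (fun p => b.1 ⊆ p) π
              (blockOf_exists_unique hπ2 hρ1 href b.2)),
              (((univ.filter (fun b : ↥ρ => Finset.choose (fun p => b.1 ⊆ p) π
                (blockOf_exists_unique hπ2 hρ1 href b.2) = p)).card).factorial : ℤ) :=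
          keyB (Fintype.card ↥ρ) _ rfl
      _ = (-1 : ℤ) ^ ρ.card *
            ∏ p ∈ π, (((ρ.filter fun b => b ⊆ p).card).factorial : ℤ) := by
          rw [hcoe]
          congr 1
          have himg : univ.image (fun b : ↥ρ => Finset.choose (fun p => b.1 ⊆ p) π
              (blockOf_exists_unique hπ2 hρ1 href b.2)) = π := by
            apply Finset.Subset.antisymm
            · intro p hp
              obtain ⟨b, -, rfl⟩ := mem_image.mp hp
              exact hgπ b
            · intro p hp
              obtain ⟨x, hx⟩ := hπ1 p hp
              obtain ⟨b, hb, hxb⟩ := part_cover hρ3 x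
              have hgb : Finset.choose (fun q => (⟨b, hb⟩ : ↥ρ).1 ⊆ q) π
                  (blockOf_exists_unique hπ2 hρ1 href hb) = p :=
                part_unique hπ2 (hgπ ⟨b, hb⟩) hp (hgsub ⟨b, hb⟩ hxb) hx
              exact mem_image.mpr ⟨⟨b, hb⟩, mem_univ _, hgb⟩
          rw [himg]
          refine Finset.prod_congr rfl fun p hp => ?_
          have hfilterρ : (univ.filter (fun b : ↥ρ => Finset.choose (fun p => b.1 ⊆ p) π
              (blockOf_exists_unique hπ2 hρ1 href b.2) = p))
              = (univ.filter (fun b : ↥ρ => b.1 ⊆ p)) := by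
            refine Finset.filter_congr fun b _ => ?_
            constructor
            · intro h; rw [← h]; exact hgsub b
            · intro h
              exact (blockOf_exists_unique hπ2 hρ1 href b.2).unique
                ⟨hgπ b, hgsub b⟩ ⟨hp, h⟩
          rw [hfilterρ, card_filter_subtype ρ (fun b => b ⊆ p)]
  -- main assembly
  have filt : ∀ k : ℕ, Finset (Fin k → Finset I) := fun k =>
    (Finset.univ : Finset (Fin k → Finset I)).filter
      (fun C => (∀ i, (C i).Nonempty) ∧
        (∀ i j, i ≠ j → Disjoint (C i) (C j)) ∧
        Finset.univ.biUnion C = Finset.univ)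
  calc ∑ k ∈ Finset.range (N + 1),
        ∑ C ∈ (Finset.univ : Finset (Fin k → Finset I)).filter
            (fun C => (∀ i, (C i).Nonempty) ∧
              (∀ i j, i ≠ j → Disjoint (C i) (C j)) ∧
              Finset.univ.biUnion C = Finset.univ),
          Finsupp.single
            ((Finset.univ : Finset (Fin k)).biUnion
              (fun i => (π.image (· ∩ C i)).filter (·.Nonempty)))
            ((-1 : ℤ) ^ k)
      = ∑ k ∈ Finset.range (N + 1),
        ∑ C ∈ (Finset.univ : Finset (Fin k → Finset I)).filter
            (fun C => (∀ i, (C i).Nonempty) ∧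
              (∀ i j, i ≠ j → Disjoint (C i) (C j)) ∧
              Finset.univ.biUnion C = Finset.univ),
          ∑ ρ ∈ R, (if ρ = (Finset.univ : Finset (Fin k)).biUnion
              (fun i => (π.image (· ∩ C i)).filter (·.Nonempty)) then
            Finsupp.single ρ ((-1 : ℤ) ^ k) else 0) := by
        refine Finset.sum_congr rfl fun k _ => Finset.sum_congr rfl fun C hC => ?_
        obtain ⟨-, hC1, hC2, hC3⟩ := mem_filter.mp hC
        rw [Finset.sum_ite_eq' R _ (fun ρ => Finsupp.single ρ ((-1 : ℤ) ^ k)),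
          if_pos (hτR k C hC1 hC2 hC3)]
    _ = ∑ k ∈ Finset.range (N + 1), ∑ ρ ∈ R,
        ∑ C ∈ (Finset.univ : Finset (Fin k → Finset I)).filter
            (fun C => (∀ i, (C i).Nonempty) ∧
              (∀ i j, i ≠ j → Disjoint (C i) (C j)) ∧
              Finset.univ.biUnion C = Finset.univ),
          (if ρ = (Finset.univ : Finset (Fin k)).biUnion
              (fun i => (π.image (· ∩ C i)).filter (·.Nonempty)) then
            Finsupp.single ρ ((-1 : ℤ) ^ k) else 0) :=
        Finset.sum_congr rfl fun k _ => Finset.sum_comm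
    _ = ∑ ρ ∈ R, ∑ k ∈ Finset.range (N + 1),
        ∑ C ∈ (Finset.univ : Finset (Fin k → Finset I)).filter
            (fun C => (∀ i, (C i).Nonempty) ∧
              (∀ i j, i ≠ j → Disjoint (C i) (C j)) ∧
              Finset.univ.biUnion C = Finset.univ),
          (if ρ = (Finset.univ : Finset (Fin k)).biUnion
              (fun i => (π.image (· ∩ C i)).filter (·.Nonempty)) then
            Finsupp.single ρ ((-1 : ℤ) ^ k) else 0) := Finset.sum_comm
    _ = ∑ ρ ∈ R, Finsupp.single ρ
          (∑ k ∈ Finset.range (N + 1),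
            ((((Finset.univ : Finset (Fin k → Finset I)).filter
              (fun C => ((∀ i, (C i).Nonempty) ∧ (∀ i j, i ≠ j → Disjoint (C i) (C j)) ∧
                  Finset.univ.biUnion C = Finset.univ) ∧
                (Finset.univ : Finset (Fin k)).biUnion
                  (fun i => (π.image (· ∩ C i)).filter (·.Nonempty)) = ρ)).card : ℤ) * (-1)^k)) := by
        refine Finset.sum_congr rfl fun ρ hρ => ?_
        have hinner : ∀ k : ℕ,
            (∑ C ∈ (Finset.univ : Finset (Fin k → Finset I)).filter
              (fun C => (∀ i, (C i).Nonempty) ∧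
                (∀ i j, i ≠ j → Disjoint (C i) (C j)) ∧
                Finset.univ.biUnion C = Finset.univ),
              (if ρ = (Finset.univ : Finset (Fin k)).biUnion
                  (fun i => (π.image (· ∩ C i)).filter (·.Nonempty)) then
                Finsupp.single ρ ((-1 : ℤ) ^ k) else 0))
            = Finsupp.single ρ
              ((((Finset.univ : Finset (Fin k → Finset I)).filter
                (fun C => ((∀ i, (C i).Nonempty) ∧ (∀ i j, i ≠ j → Disjoint (C i) (C j)) ∧
                    Finset.univ.biUnion C = Finset.univ) ∧
                  (Finset.univ : Finset (Fin k)).biUnion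
                    (fun i => (π.image (· ∩ C i)).filter (·.Nonempty)) = ρ)).card : ℤ) * (-1)^k) := by
          intro k
          rw [← Finset.sum_filter]
          rw [Finset.filter_filter]
          have hseteq : (Finset.univ : Finset (Fin k → Finset I)).filter
              (fun C => ((∀ i, (C i).Nonempty) ∧ (∀ i j, i ≠ j → Disjoint (C i) (C j)) ∧
                  Finset.univ.biUnion C = Finset.univ) ∧
                ρ = (Finset.univ : Finset (Fin k)).biUnion
                  (fun i => (π.image (· ∩ C i)).filter (·.Nonempty)))
              = (Finset.univ : Finset (Fin k → Finset I)).filter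
              (fun C => ((∀ i, (C i).Nonempty) ∧ (∀ i j, i ≠ j → Disjoint (C i) (C j)) ∧
                  Finset.univ.biUnion C = Finset.univ) ∧
                (Finset.univ : Finset (Fin k)).biUnion
                  (fun i => (π.image (· ∩ C i)).filter (·.Nonempty)) = ρ) := by
            refine Finset.filter_congr fun C _ => ?_
            constructor
            · rintro ⟨h1, h2⟩; exact ⟨h1, h2.symm⟩
            · rintro ⟨h1, h2⟩; exact ⟨h1, h2.symm⟩
          rw [hseteq, Finset.sum_const, Finsupp.smul_single, nsmul_eq_mul]
        rw [Finset.sum_congr rfl (fun k _ => hinner k)]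
        exact (map_sum (Finsupp.singleAddHom ρ) _ (Finset.range (N + 1))).symm
    _ = ∑ ρ ∈ R, Finsupp.single ρ
          ((-1 : ℤ) ^ ρ.card *
            ∏ p ∈ π, (((ρ.filter fun b => b ⊆ p).card).factorial : ℤ)) :=
        Finset.sum_congr rfl fun ρ hρ => by rw [hcoef ρ hρ]
end
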